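/- arXiv:1009.3891 — 2 statements merged into one kernel-verified Lean document; each statement's English description precedes it below -/
import Mathlib

section
/- Let (A_i, B_i, E_i), i = 1,…,n, be i.i.d. triples of random variables with values in finite sets 𝒜×ℬ×ℰ, let W = f(Aⁿ) for an arbitrary function f : 𝒜ⁿ → 𝒲 into a finite set, and for each i define V_i = (W, A^{i−1}, B^{i−1}, B_{i+1}ⁿ, E^{i−1}). Then H(W) ≥ Σ_{i=1}^n I(V_i ; A_i | B_i). -/
noncomputable section

namespace SLSC

open scoped BigOperators

variable {Ω : Type*} [Fintype Ω]

open Classical in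
/-- Probability that the random variable `f` takes the value `x`, under the
probability mass function `w` on the finite sample space `Ω`. -/
def pr {X : Type*} (w : Ω → ℝ) (f : Ω → X) (x : X) : ℝ :=
  ∑ ω, if f ω = x then w ω else 0

/-- `w` is a probability mass function on `Ω`. -/
def IsPMF (w : Ω → ℝ) : Prop := (∀ ω, 0 ≤ w ω) ∧ ∑ ω, w ω = 1

/-- Shannon entropy (base 2) of the random variable `f`. -/
def H {X : Type*} [Fintype X] (w : Ω → ℝ) (f : Ω → X) : ℝ :=
  -∑ x, pr w f x * Real.logb 2 (pr w f x)

/-- Conditional entropy `H(f | g)` (base 2). -/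
def condH {X Y : Type*} [Fintype X] [Fintype Y] (w : Ω → ℝ) (f : Ω → X) (g : Ω → Y) : ℝ :=
  H w (fun ω => (f ω, g ω)) - H w g

/-- Mutual information `I(f ; g)` (base 2). -/
def MI {X Y : Type*} [Fintype X] [Fintype Y] (w : Ω → ℝ) (f : Ω → X) (g : Ω → Y) : ℝ :=
  H w f + H w g - H w (fun ω => (f ω, g ω))

/-- Conditional mutual information `I(f ; g | h)` (base 2). -/
def condMI {X Y Z : Type*} [Fintype X] [Fintype Y] [Fintype Z]
    (w : Ω → ℝ) (f : Ω → X) (g : Ω → Y) (h : Ω → Z) : ℝ :=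
  condH w f h - condH w f (fun ω => (g ω, h ω))

/-- Expectation of the real random variable `f`. -/
def expect (w : Ω → ℝ) (f : Ω → ℝ) : ℝ := ∑ ω, w ω * f ω

/-- Markov chain `f – g – h` : `f` and `h` are conditionally independent given `g`. -/
def Markov {X Y Z : Type*} (w : Ω → ℝ) (f : Ω → X) (g : Ω → Y) (h : Ω → Z) : Prop :=
  ∀ x y z,
    pr w (fun ω => (f ω, g ω, h ω)) (x, y, z) * pr w g y
      = pr w (fun ω => (f ω, g ω)) (x, y) * pr w (fun ω => (g ω, h ω)) (y, z)

/-- Markov chain `f – g – h – k` : each variable is conditionally independent of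
the preceding ones given its immediate predecessor. -/
def Markov4 {X Y Z T : Type*} (w : Ω → ℝ)
    (f : Ω → X) (g : Ω → Y) (h : Ω → Z) (k : Ω → T) : Prop :=
  Markov w f g h ∧ Markov w (fun ω => (f ω, g ω)) h k

variable {𝒜 ℬ ℰ : Type*} [Fintype 𝒜] [Fintype ℬ] [Fintype ℰ]

/-- Weight of the i.i.d. source `(Aⁿ,Bⁿ,Eⁿ)` with per-letter distribution `p`. -/
def iidW (p : 𝒜 × ℬ × ℰ → ℝ) (n : ℕ) : (Fin n → 𝒜 × ℬ × ℰ) → ℝ :=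
  fun ω => ∏ i, p (ω i)

/-- Alice's source sequence `Aⁿ`. -/
def An (n : ℕ) : (Fin n → 𝒜 × ℬ × ℰ) → Fin n → 𝒜 := fun ω i => (ω i).1

/-- Bob's side-information sequence `Bⁿ`. -/
def Bn (n : ℕ) : (Fin n → 𝒜 × ℬ × ℰ) → Fin n → ℬ := fun ω i => (ω i).2.1

/-- Eve's side-information sequence `Eⁿ`. -/
def En (n : ℕ) : (Fin n → 𝒜 × ℬ × ℰ) → Fin n → ℰ := fun ω i => (ω i).2.2

/-- `(R,D,Δ)` is achievable for the memoryless source `p` with distortion measure `d`: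
for every `ε > 0` there is an `(n, R+ε)`-code (encoder `f`, decoder `g`, at most
`2^{n(R+ε)}` messages) whose expected distortion at Bob is at most `D + ε` and whose
normalized equivocation at Eve is at least `Δ - ε`. -/
def Achievable (p : 𝒜 × ℬ × ℰ → ℝ) (d : 𝒜 → 𝒜 → ℝ) (R D Δ : ℝ) : Prop :=
  ∀ ε > (0 : ℝ), ∃ n M : ℕ, 0 < n ∧ 0 < M ∧
    (M : ℝ) ≤ (2 : ℝ) ^ ((n : ℝ) * (R + ε)) ∧
    ∃ (f : (Fin n → 𝒜) → Fin M) (g : Fin M → (Fin n → ℬ) → Fin n → 𝒜),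
      expect (iidW p n)
          (fun ω => ((n : ℝ))⁻¹ * ∑ i, d (An n ω i) (g (f (An n ω)) (Bn n ω) i)) ≤ D + ε ∧
      Δ - ε ≤ ((n : ℝ))⁻¹ * condH (iidW p n) (An n) (fun ω => (f (An n ω), En n ω))

/-- The single-letter region of Theorem 1, with auxiliary alphabets `Fin m` (for `U`)
and `Fin k` (for `V`): there is a joint pmf `q` of `(U,V,A,B,E)` with marginal `p`
on `(A,B,E)`, a Markov chain `U – V – A – (B,E)`, and a function `Â : 𝒱 × ℬ → 𝒜`
such that `R ≥ I(V;A|B)`, `D ≥ E[d(A, Â(V,B))]` and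
`Δ ≤ [H(A|V,B) + I(A;B|U) - I(A;E|U)]₊`. -/
def InRegion (p : 𝒜 × ℬ × ℰ → ℝ) (d : 𝒜 → 𝒜 → ℝ) (R D Δ : ℝ) (m k : ℕ) : Prop :=
  ∃ (q : Fin m × Fin k × 𝒜 × ℬ × ℰ → ℝ) (Ahat : Fin k × ℬ → 𝒜),
    IsPMF q ∧
    (∀ x : 𝒜 × ℬ × ℰ, pr q (fun ω => ω.2.2) x = p x) ∧
    Markov4 q (fun ω => ω.1) (fun ω => ω.2.1) (fun ω => ω.2.2.1) (fun ω => ω.2.2.2) ∧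
    condMI q (fun ω => ω.2.1) (fun ω => ω.2.2.1) (fun ω => ω.2.2.2.1) ≤ R ∧
    expect q (fun ω => d ω.2.2.1 (Ahat (ω.2.1, ω.2.2.2.1))) ≤ D ∧
    Δ ≤ max (condH q (fun ω => ω.2.2.1) (fun ω => (ω.2.1, ω.2.2.2.1))
          + condMI q (fun ω => ω.2.2.1) (fun ω => ω.2.2.2.1) (fun ω => ω.1)
          - condMI q (fun ω => ω.2.2.1) (fun ω => ω.2.2.2.2) (fun ω => ω.1)) 0

/-- Side information `B` (second coordinate) is less noisy than `E` (third coordinate):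
`I(U;B) ≥ I(U;E)` for every `U` such that `U – A – (B,E)` is a Markov chain. -/
def LessNoisyBE (p : 𝒜 × ℬ × ℰ → ℝ) : Prop :=
  ∀ (m : ℕ) (q : Fin m × 𝒜 × ℬ × ℰ → ℝ), IsPMF q →
    (∀ x, pr q (fun ω => ω.2) x = p x) →
    Markov q (fun ω => ω.1) (fun ω => ω.2.1) (fun ω => ω.2.2) →
    MI q (fun ω => ω.1) (fun ω => ω.2.2.2) ≤ MI q (fun ω => ω.1) (fun ω => ω.2.2.1)

/-- Side information `E` (third coordinate) is less noisy than `B` (second coordinate):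
`I(U;E) ≥ I(U;B)` for every `U` such that `U – A – (B,E)` is a Markov chain. -/
def LessNoisyEB (p : 𝒜 × ℬ × ℰ → ℝ) : Prop :=
  ∀ (m : ℕ) (q : Fin m × 𝒜 × ℬ × ℰ → ℝ), IsPMF q →
    (∀ x, pr q (fun ω => ω.2) x = p x) →
    Markov q (fun ω => ω.1) (fun ω => ω.2.1) (fun ω => ω.2.2) →
    MI q (fun ω => ω.1) (fun ω => ω.2.2.1) ≤ MI q (fun ω => ω.1) (fun ω => ω.2.2.2)

/-- The auxiliary random variable `Uᵢ = (W, B_{i+1}ⁿ, E^{i-1})` where `W = f(Aⁿ)`. -/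
def auxU {𝒲 : Type*} (n : ℕ) (f : (Fin n → 𝒜) → 𝒲) (i : Fin n)
    (ω : Fin n → 𝒜 × ℬ × ℰ) :
    𝒲 × ({j : Fin n // i < j} → ℬ) × ({j : Fin n // j < i} → ℰ) :=
  (f (An n ω), fun j => (ω j.1).2.1, fun j => (ω j.1).2.2)

/-- The auxiliary random variable `Vᵢ = (W, A^{i-1}, B^{i-1}, B_{i+1}ⁿ, E^{i-1})`
where `W = f(Aⁿ)`. -/
def auxV {𝒲 : Type*} (n : ℕ) (f : (Fin n → 𝒜) → 𝒲) (i : Fin n)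
    (ω : Fin n → 𝒜 × ℬ × ℰ) :
    𝒲 × ({j : Fin n // j < i} → 𝒜) × ({j : Fin n // j < i} → ℬ)
      × ({j : Fin n // i < j} → ℬ) × ({j : Fin n // j < i} → ℰ) :=
  (f (An n ω), fun j => (ω j.1).1, fun j => (ω j.1).2.1,
    fun j => (ω j.1).2.1, fun j => (ω j.1).2.2)

/-- Binary symmetric channel with crossover probability `p`: `BSC p a e` is the
probability that the output is `e` given that the input is `a`. -/
def BSC (p : ℝ) (a e : Bool) : ℝ := if e = a then 1 - p else p

/-- Binary erasure channel with erasure probability `ε` (output `none` is the erasure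
symbol): `BEC ε a b` is the probability that the output is `b` given input `a`. -/
def BEC (ε : ℝ) (a : Bool) (b : Option Bool) : ℝ :=
  match b with
  | some b' => if b' = a then 1 - ε else 0
  | none => ε

/-- Binary entropy function (base 2). -/
def h2 (x : ℝ) : ℝ := -(x * Real.logb 2 x) - (1 - x) * Real.logb 2 (1 - x)

/-- `sop a b = a ⋆ b = a(1-b) + (1-a)b`. -/
def sop (a b : ℝ) : ℝ := a * (1 - b) + (1 - a) * b

/-- Hamming distortion on `Bool`. -/
def hamming (a a' : Bool) : ℝ := if a = a' then 0 else 1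

/-- Joint distribution of `(A,B,E)` for a uniform binary source `A`, with
`B = BEC(ε)(A)` at Bob and `E = BSC(p)(A)` at Eve (independent channel noises). -/
def binSrc (p ε : ℝ) : Bool × Option Bool × Bool → ℝ :=
  fun x => (1 / 2) * BEC ε x.1 x.2.1 * BSC p x.1 x.2.2

/-- Joint distribution of `(U,V,A,B,E)` in the achievability scheme for the binary
example: `A` uniform, `V = A ⊕ Z_α`, `U = V ⊕ Z_β`, `B = BEC(ε)(A)`, `E = A ⊕ N_p`,
with all noises mutually independent.  Coordinates: `(u,v,a,b,e)`. -/
def exJoint (p ε α β : ℝ) : Bool × Bool × Bool × Option Bool × Bool → ℝ :=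
  fun x =>
    (1 / 2) * BSC α x.2.2.1 x.2.1 * BSC β x.2.1 x.1
      * BEC ε x.2.2.1 x.2.2.2.1 * BSC p x.2.2.1 x.2.2.2.2
section AuxLemmas

variable {Ω : Type*} [Fintype Ω] {X Y Z : Type*} {w : Ω → ℝ}

lemma pr_nonneg (hw : ∀ ω, 0 ≤ w ω) (f : Ω → X) (x : X) : 0 ≤ pr w f x := by
  unfold pr
  exact Finset.sum_nonneg fun ω _ => by split <;> simp [hw ω]

lemma sum_pr [Fintype X] (f : Ω → X) : ∑ x, pr w f x = ∑ ω, w ω := by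
  classical
  unfold pr
  rw [Finset.sum_comm]
  refine Finset.sum_congr rfl fun ω _ => ?_
  simp

lemma pr_comp_inj (g : Ω → Y) (σ : Y → X) (hσ : Function.Injective σ) (y : Y) :
    pr w (fun ω => σ (g ω)) (σ y) = pr w g y := by
  classical
  unfold pr
  exact Finset.sum_congr rfl fun ω _ => if_congr hσ.eq_iff rfl rfl

lemma pr_eq_zero_of_not_mem (g : Ω → Y) (σ : Y → X) (x : X) (hx : ∀ y, σ y ≠ x) :
    pr w (fun ω => σ (g ω)) x = 0 := by
  unfold pr
  exact Finset.sum_eq_zero fun ω _ => if_neg (hx (g ω))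

lemma H_comp_inj [Fintype X] [Fintype Y] (g : Ω → Y) (σ : Y → X)
    (hσ : Function.Injective σ) :
    H w (fun ω => σ (g ω)) = H w g := by
  classical
  unfold H
  congr 1
  rw [← Finset.sum_subset (Finset.subset_univ ((Finset.univ : Finset Y).image σ))]
  · rw [Finset.sum_image (fun a _ b _ h => hσ h)]
    exact Finset.sum_congr rfl fun y _ => by rw [pr_comp_inj g σ hσ]
  · intro x _ hx
    have h0 : pr w (fun ω => σ (g ω)) x = 0 := by
      refine pr_eq_zero_of_not_mem g σ x fun y hy => hx ?_
      exact hy ▸ Finset.mem_image_of_mem σ (Finset.mem_univ y)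
    simp [h0]

lemma pr_snd [Fintype X] (u : Ω → X) (v : Ω → Y) (y : Y) :
    pr w v y = ∑ x, pr w (fun ω => (u ω, v ω)) (x, y) := by
  classical
  unfold pr
  rw [Finset.sum_comm]
  refine Finset.sum_congr rfl fun ω _ => ?_
  simp [Prod.ext_iff, ite_and]

lemma pr_fst [Fintype Y] (u : Ω → X) (v : Ω → Y) (x : X) :
    pr w u x = ∑ y, pr w (fun ω => (u ω, v ω)) (x, y) := by
  classical
  unfold pr
  rw [Finset.sum_comm]
  refine Finset.sum_congr rfl fun ω _ => ?_
  simp [Prod.ext_iff, ite_and]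

lemma pr_mid [Fintype Y] (f : Ω → X) (g : Ω → Y) (h : Ω → Z) (x : X) (z : Z) :
    pr w (fun ω => (f ω, h ω)) (x, z) = ∑ y, pr w (fun ω => (f ω, g ω, h ω)) (x, y, z) := by
  classical
  unfold pr
  rw [Finset.sum_comm]
  refine Finset.sum_congr rfl fun ω _ => ?_
  simp [Prod.ext_iff, and_left_comm, ite_and]

lemma pr_pair_le_snd [Fintype X] (hw : ∀ ω, 0 ≤ w ω) (u : Ω → X) (v : Ω → Y) (x : X) (y : Y) :
    pr w (fun ω => (u ω, v ω)) (x, y) ≤ pr w v y := by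
  rw [pr_snd u v y]
  exact Finset.single_le_sum (f := fun x' => pr w (fun ω => (u ω, v ω)) (x', y)) (fun x' _ => pr_nonneg hw _ _) (Finset.mem_univ x)

end AuxLemmas
section AuxLemmas2

variable {Ω : Type*} [Fintype Ω] {X Y Z : Type*} {w : Ω → ℝ}

lemma H_snd_le [Fintype X] [Fintype Y] (hw : ∀ ω, 0 ≤ w ω) (u : Ω → X) (v : Ω → Y) :
    H w v ≤ H w (fun ω => (u ω, v ω)) := by
  unfold H
  rw [Fintype.sum_prod_type, neg_le_neg_iff, Finset.sum_comm]
  refine Finset.sum_le_sum fun y _ => ?_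
  calc ∑ x, pr w (fun ω => (u ω, v ω)) (x, y) * Real.logb 2 (pr w (fun ω => (u ω, v ω)) (x, y))
      ≤ ∑ x, pr w (fun ω => (u ω, v ω)) (x, y) * Real.logb 2 (pr w v y) := by
        refine Finset.sum_le_sum fun x _ => ?_
        rcases (pr_nonneg hw (fun ω => (u ω, v ω)) (x, y)).eq_or_lt with h | h
        · rw [← h]; simp
        · exact mul_le_mul_of_nonneg_left
            (Real.logb_le_logb_of_le one_lt_two h (pr_pair_le_snd hw u v x y)) h.le
    _ = pr w v y * Real.logb 2 (pr w v y) := by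
        rw [← Finset.sum_mul, ← pr_snd]

lemma condH_nonneg [Fintype X] [Fintype Y] (hw : ∀ ω, 0 ≤ w ω) (f : Ω → X) (g : Ω → Y) :
    0 ≤ condH w f g := sub_nonneg.2 (H_snd_le hw f g)

lemma condH_comp_inj [Fintype X] [Fintype Y] [Fintype Z] (f : Ω → X) (g : Ω → Y) (σ : Y → Z)
    (hσ : Function.Injective σ) :
    condH w f (fun ω => σ (g ω)) = condH w f g := by
  unfold condH
  rw [H_comp_inj g σ hσ]
  congr 1
  have h1 : (fun ω => (f ω, σ (g ω))) = fun ω => (Prod.map id σ) (f ω, g ω) := rfl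
  rw [h1, H_comp_inj _ _ (Function.injective_id.prodMap hσ)]

lemma H_add_of_indep [Fintype X] [Fintype Y] (hw : IsPMF w) (u : Ω → X) (v : Ω → Y)
    (hind : ∀ x y, pr w (fun ω => (u ω, v ω)) (x, y) = pr w u x * pr w v y) :
    H w (fun ω => (u ω, v ω)) = H w u + H w v := by
  unfold H
  rw [Fintype.sum_prod_type]
  have key : ∀ x y, pr w u x * pr w v y * Real.logb 2 (pr w u x * pr w v y)
      = pr w u x * Real.logb 2 (pr w u x) * pr w v y
        + pr w u x * (pr w v y * Real.logb 2 (pr w v y)) := by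
    intro x y
    rcases eq_or_ne (pr w u x) 0 with h | h
    · simp [h]
    rcases eq_or_ne (pr w v y) 0 with h' | h'
    · simp [h']
    rw [Real.logb_mul h h']; ring
  have hu1 : ∑ x, pr w u x = 1 := by rw [sum_pr]; exact hw.2
  have hv1 : ∑ y, pr w v y = 1 := by rw [sum_pr]; exact hw.2
  have main : ∑ x, ∑ y, pr w u x * pr w v y * Real.logb 2 (pr w u x * pr w v y)
      = (∑ x, pr w u x * Real.logb 2 (pr w u x)) + ∑ y, pr w v y * Real.logb 2 (pr w v y) := by
    have e1 : ∀ x, ∑ y, pr w u x * pr w v y * Real.logb 2 (pr w u x * pr w v y)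
        = pr w u x * Real.logb 2 (pr w u x)
          + pr w u x * ∑ y, pr w v y * Real.logb 2 (pr w v y) := by
      intro x
      rw [Finset.sum_congr rfl fun y _ => key x y, Finset.sum_add_distrib,
        ← Finset.mul_sum, ← Finset.mul_sum, hv1, mul_one]
    rw [Finset.sum_congr rfl fun x _ => e1 x, Finset.sum_add_distrib, ← Finset.sum_mul, hu1,
      one_mul]
  simp_rw [hind]
  rw [main]
  ring

lemma pr_assoc (f : Ω → X) (g : Ω → Y) (h : Ω → Z) (x : X) (y : Y) (z : Z) :
    pr w (fun ω => (f ω, g ω, h ω)) (x, y, z)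
      = pr w (fun ω => ((f ω, g ω), h ω)) ((x, y), z) := by
  have hσ : Function.Injective (fun p : (X × Y) × Z => (p.1.1, p.1.2, p.2)) := by
    intro a b hab
    simp only [Prod.mk.injEq] at hab
    exact Prod.ext (Prod.ext hab.1 hab.2.1) hab.2.2
  simpa using (pr_comp_inj (w := w) (fun ω => ((f ω, g ω), h ω))
    (fun p => (p.1.1, p.1.2, p.2)) hσ ((x, y), z))

lemma condH_of_indep [Fintype X] [Fintype Y] [Fintype Z] (hw : IsPMF w)
    (f : Ω → X) (g : Ω → Y) (k : Ω → Z)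
    (hind : ∀ x y z, pr w (fun ω => ((f ω, g ω), k ω)) ((x, y), z)
      = pr w (fun ω => (f ω, g ω)) (x, y) * pr w k z) :
    condH w f (fun ω => (g ω, k ω)) = condH w f g := by
  have hgk : ∀ y z, pr w (fun ω => (g ω, k ω)) (y, z) = pr w g y * pr w k z := by
    intro y z
    rw [pr_snd (fun ω => f ω) (fun ω => (g ω, k ω)) (y, z)]
    have : ∀ x, pr w (fun ω => (f ω, g ω, k ω)) (x, y, z)
        = pr w (fun ω => (f ω, g ω)) (x, y) * pr w k z := fun x =>
      (pr_assoc f g k x y z).trans (hind x y z)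
    simp_rw [this, ← Finset.sum_mul, ← pr_snd]
  have h1 : H w (fun ω => (g ω, k ω)) = H w g + H w k := H_add_of_indep hw g k hgk
  have h2 : H w (fun ω => (f ω, (g ω, k ω))) = H w (fun ω => (f ω, g ω)) + H w k := by
    have hassoc : (fun ω => (f ω, (g ω, k ω)))
        = fun ω => ((fun p : (X × Y) × Z => (p.1.1, p.1.2, p.2)) ((f ω, g ω), k ω)) := rfl
    have hσ : Function.Injective (fun p : (X × Y) × Z => (p.1.1, p.1.2, p.2)) := by
      intro a b hab
      simp only [Prod.mk.injEq] at hab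
      exact Prod.ext (Prod.ext hab.1 hab.2.1) hab.2.2
    rw [hassoc, H_comp_inj _ _ hσ]
    exact H_add_of_indep hw (fun ω => (f ω, g ω)) k fun xy z => by
      obtain ⟨x, y⟩ := xy; exact hind x y z
  unfold condH
  rw [h1, h2]
  ring

end AuxLemmas2
section AuxLemmas3

variable {Ω : Type*} [Fintype Ω] {X Y Z : Type*} {w : Ω → ℝ}

lemma submodular [Fintype X] [Fintype Y] [Fintype Z] (hw : IsPMF w)
    (f : Ω → X) (g : Ω → Y) (h : Ω → Z) :
    condH w f (fun ω => (g ω, h ω)) ≤ condH w f h := by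
  set P3 : X → Y → Z → ℝ := fun x y z => pr w (fun ω => (f ω, g ω, h ω)) (x, y, z) with hP3
  set Pfh : X → Z → ℝ := fun x z => pr w (fun ω => (f ω, h ω)) (x, z) with hPfh
  set Pgh : Y → Z → ℝ := fun y z => pr w (fun ω => (g ω, h ω)) (y, z) with hPgh
  set Ph : Z → ℝ := fun z => pr w h z with hPh
  have hP3n : ∀ x y z, 0 ≤ P3 x y z := fun x y z => pr_nonneg hw.1 _ _
  have hfhn : ∀ x z, 0 ≤ Pfh x z := fun x z => pr_nonneg hw.1 _ _
  have hghn : ∀ y z, 0 ≤ Pgh y z := fun y z => pr_nonneg hw.1 _ _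
  have hphn : ∀ z, 0 ≤ Ph z := fun z => pr_nonneg hw.1 _ _
  have hm1 : ∀ x z, Pfh x z = ∑ y, P3 x y z := fun x z => pr_mid f g h x z
  have hm2 : ∀ y z, Pgh y z = ∑ x, P3 x y z := fun y z => pr_snd f (fun ω => (g ω, h ω)) (y, z)
  have hm3 : ∀ z, Ph z = ∑ y, Pgh y z := fun z => pr_snd g h z
  have hm4 : ∀ z, Ph z = ∑ x, Pfh x z := fun z => pr_snd f h z
  have hle_fh : ∀ x y z, P3 x y z ≤ Pfh x z := by
    intro x y z
    rw [hm1]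
    exact Finset.single_le_sum (f := fun y => P3 x y z) (fun y' _ => hP3n x y' z)
      (Finset.mem_univ y)
  have hle_gh : ∀ x y z, P3 x y z ≤ Pgh y z := by
    intro x y z
    rw [hm2]
    exact Finset.single_le_sum (f := fun x => P3 x y z) (fun x' _ => hP3n x' y z)
      (Finset.mem_univ x)
  have hle_ph : ∀ x z, Pfh x z ≤ Ph z := by
    intro x z
    rw [hm4]
    exact Finset.single_le_sum (f := fun x => Pfh x z) (fun x' _ => hfhn x' z)
      (Finset.mem_univ x)
  have hle_ph' : ∀ y z, Pgh y z ≤ Ph z := by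
    intro y z
    rw [hm3]
    exact Finset.single_le_sum (f := fun y => Pgh y z) (fun y' _ => hghn y' z)
      (Finset.mem_univ y)
  have hlog2 : (0:ℝ) < Real.log 2 := Real.log_pos one_lt_two
  -- pointwise Gibbs bound
  have key1 : ∀ x y z, P3 x y z * Real.logb 2 (Pfh x z * Pgh y z / (Ph z * P3 x y z))
      ≤ (Pfh x z * Pgh y z / Ph z - P3 x y z) / Real.log 2 := by
    intro x y z
    rcases (hP3n x y z).eq_or_lt with h0 | h0
    · rw [← h0, zero_mul, sub_zero]
      exact div_nonneg (div_nonneg (mul_nonneg (hfhn x z) (hghn y z)) (hphn z)) hlog2.le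
    · have hfh : 0 < Pfh x z := lt_of_lt_of_le h0 (hle_fh x y z)
      have hgh : 0 < Pgh y z := lt_of_lt_of_le h0 (hle_gh x y z)
      have hph : 0 < Ph z := lt_of_lt_of_le hfh (hle_ph x z)
      have hA : 0 < Pfh x z * Pgh y z / (Ph z * P3 x y z) := by positivity
      have hlog := Real.log_le_sub_one_of_pos hA
      have hQP : P3 x y z * (Pfh x z * Pgh y z / (Ph z * P3 x y z))
          = Pfh x z * Pgh y z / Ph z := by
        field_simp
      have h2 : P3 x y z * Real.log (Pfh x z * Pgh y z / (Ph z * P3 x y z))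
          ≤ Pfh x z * Pgh y z / Ph z - P3 x y z := by
        calc P3 x y z * Real.log (Pfh x z * Pgh y z / (Ph z * P3 x y z))
            ≤ P3 x y z * (Pfh x z * Pgh y z / (Ph z * P3 x y z) - 1) :=
              mul_le_mul_of_nonneg_left hlog h0.le
          _ = Pfh x z * Pgh y z / Ph z - P3 x y z := by rw [mul_sub, mul_one, hQP]
      rw [Real.logb, ← mul_div_assoc]
      exact div_le_div_of_nonneg_right h2 hlog2.le
  -- total mass of the auxiliary measure
  have hsum3 : ∑ x, ∑ y, ∑ z, P3 x y z = 1 := by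
    have := sum_pr (w := w) (fun ω => (f ω, g ω, h ω))
    rw [hw.2] at this
    simp_rw [Fintype.sum_prod_type] at this
    exact this
  have key2 : ∑ x, ∑ y, ∑ z, Pfh x z * Pgh y z / Ph z ≤ 1 := by
    have hswap : ∑ x, ∑ y, ∑ z, Pfh x z * Pgh y z / Ph z
        = ∑ z, ∑ x, ∑ y, Pfh x z * Pgh y z / Ph z := by
      calc ∑ x, ∑ y, ∑ z, Pfh x z * Pgh y z / Ph z
          = ∑ x, ∑ z, ∑ y, Pfh x z * Pgh y z / Ph z :=
            Finset.sum_congr rfl fun x _ => Finset.sum_comm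
        _ = ∑ z, ∑ x, ∑ y, Pfh x z * Pgh y z / Ph z := Finset.sum_comm
    rw [hswap]
    have hz : ∀ z, ∑ x, ∑ y, Pfh x z * Pgh y z / Ph z ≤ Ph z := by
      intro z
      rcases eq_or_ne (Ph z) 0 with h0 | h0
      · have hfh0 : ∀ x, Pfh x z = 0 := fun x => le_antisymm (h0 ▸ hle_ph x z) (hfhn x z)
        simp [hfh0, h0]
      · have hx : ∀ x, ∑ y, Pfh x z * Pgh y z / Ph z = Pfh x z := by
          intro x
          have : ∀ y, Pfh x z * Pgh y z / Ph z = Pfh x z / Ph z * Pgh y z := by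
            intro y; ring
          rw [Finset.sum_congr rfl fun y _ => this y, ← Finset.mul_sum, ← hm3 z,
            div_mul_cancel₀ _ h0]
        rw [Finset.sum_congr rfl fun x _ => hx x, ← hm4 z]
    calc ∑ z, ∑ x, ∑ y, Pfh x z * Pgh y z / Ph z ≤ ∑ z, Ph z :=
          Finset.sum_le_sum fun z _ => hz z
      _ = 1 := by rw [hPh, sum_pr, hw.2]
  have gibbs : ∑ x, ∑ y, ∑ z,
      P3 x y z * Real.logb 2 (Pfh x z * Pgh y z / (Ph z * P3 x y z)) ≤ 0 := by
    calc ∑ x, ∑ y, ∑ z, P3 x y z * Real.logb 2 (Pfh x z * Pgh y z / (Ph z * P3 x y z))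
        ≤ ∑ x, ∑ y, ∑ z, (Pfh x z * Pgh y z / Ph z - P3 x y z) / Real.log 2 :=
          Finset.sum_le_sum fun x _ => Finset.sum_le_sum fun y _ =>
            Finset.sum_le_sum fun z _ => key1 x y z
      _ = ((∑ x, ∑ y, ∑ z, Pfh x z * Pgh y z / Ph z) - 1) / Real.log 2 := by
          simp_rw [← Finset.sum_div, Finset.sum_sub_distrib]
          rw [hsum3]
      _ ≤ 0 := div_nonpos_of_nonpos_of_nonneg (sub_nonpos.2 key2) hlog2.le
  -- collapsing sums against marginals
  have hcollapse1 : ∀ c : X → Z → ℝ,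
      ∑ x, ∑ y, ∑ z, P3 x y z * c x z = ∑ x, ∑ z, Pfh x z * c x z := by
    intro c
    refine Finset.sum_congr rfl fun x _ => ?_
    rw [Finset.sum_comm]
    refine Finset.sum_congr rfl fun z _ => ?_
    rw [← Finset.sum_mul, ← hm1]
  have hcollapse2 : ∀ c : Y → Z → ℝ,
      ∑ x, ∑ y, ∑ z, P3 x y z * c y z = ∑ y, ∑ z, Pgh y z * c y z := by
    intro c
    rw [Finset.sum_comm]
    refine Finset.sum_congr rfl fun y _ => ?_
    rw [Finset.sum_comm]
    refine Finset.sum_congr rfl fun z _ => ?_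
    rw [← Finset.sum_mul, ← hm2]
  have hcollapse3 : ∀ c : Z → ℝ,
      ∑ x, ∑ y, ∑ z, P3 x y z * c z = ∑ z, Ph z * c z := by
    intro c
    rw [hcollapse2 (fun _ z => c z), Finset.sum_comm]
    refine Finset.sum_congr rfl fun z _ => ?_
    rw [← Finset.sum_mul, ← hm3]
  have term : ∀ x y z, P3 x y z * Real.logb 2 (Pfh x z * Pgh y z / (Ph z * P3 x y z))
      = P3 x y z * Real.logb 2 (Pfh x z) + P3 x y z * Real.logb 2 (Pgh y z)
        - P3 x y z * Real.logb 2 (Ph z) - P3 x y z * Real.logb 2 (P3 x y z) := by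
    intro x y z
    rcases (hP3n x y z).eq_or_lt with h0 | h0
    · rw [← h0]; ring
    · have hfh : 0 < Pfh x z := lt_of_lt_of_le h0 (hle_fh x y z)
      have hgh : 0 < Pgh y z := lt_of_lt_of_le h0 (hle_gh x y z)
      have hph : 0 < Ph z := lt_of_lt_of_le hfh (hle_ph x z)
      rw [Real.logb_div (mul_ne_zero hfh.ne' hgh.ne') (mul_ne_zero hph.ne' h0.ne'),
        Real.logb_mul hfh.ne' hgh.ne', Real.logb_mul hph.ne' h0.ne']
      ring
  have expand : ∑ x, ∑ y, ∑ z,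
      P3 x y z * Real.logb 2 (Pfh x z * Pgh y z / (Ph z * P3 x y z))
      = (∑ x, ∑ z, Pfh x z * Real.logb 2 (Pfh x z))
        + (∑ y, ∑ z, Pgh y z * Real.logb 2 (Pgh y z))
        - (∑ z, Ph z * Real.logb 2 (Ph z))
        - (∑ x, ∑ y, ∑ z, P3 x y z * Real.logb 2 (P3 x y z)) := by
    simp_rw [term, Finset.sum_sub_distrib, Finset.sum_add_distrib]
    rw [hcollapse1 (fun x z => Real.logb 2 (Pfh x z)),
      hcollapse2 (fun y z => Real.logb 2 (Pgh y z)),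
      hcollapse3 (fun z => Real.logb 2 (Ph z))]
  have hH3 : H w (fun ω => (f ω, g ω, h ω))
      = -∑ x, ∑ y, ∑ z, P3 x y z * Real.logb 2 (P3 x y z) := by
    unfold H
    simp_rw [Fintype.sum_prod_type]
    rfl
  have hHfh : H w (fun ω => (f ω, h ω))
      = -∑ x, ∑ z, Pfh x z * Real.logb 2 (Pfh x z) := by
    unfold H
    simp_rw [Fintype.sum_prod_type]
    rfl
  have hHgh : H w (fun ω => (g ω, h ω))
      = -∑ y, ∑ z, Pgh y z * Real.logb 2 (Pgh y z) := by
    unfold H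
    simp_rw [Fintype.sum_prod_type]
    rfl
  have hHh : H w h = -∑ z, Ph z * Real.logb 2 (Ph z) := rfl
  show H w (fun ω => (f ω, g ω, h ω)) - H w (fun ω => (g ω, h ω))
      ≤ H w (fun ω => (f ω, h ω)) - H w h
  rw [hH3, hHfh, hHgh, hHh]
  have := expand ▸ gibbs
  linarith [this]

lemma H_const [Fintype X] (hw : IsPMF w) (c : X) : H w (fun _ => c) = 0 := by
  classical
  unfold H
  rw [neg_eq_zero]
  refine Finset.sum_eq_zero fun x _ => ?_
  rcases eq_or_ne c x with hcx | hcx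
  · have : pr w (fun _ : Ω => c) x = 1 := by
      unfold pr
      subst hcx
      simp [hw.2]
    rw [this]
    simp
  · have : pr w (fun _ : Ω => c) x = 0 := by
      unfold pr
      refine Finset.sum_eq_zero fun ω _ => if_neg hcx
    rw [this]
    simp

set_option maxHeartbeats 1000000 in
lemma condH_le_H [Fintype X] [Fintype Y] (hw : IsPMF w) (f : Ω → X) (g : Ω → Y) :
    condH w f g ≤ H w f := by
  have hinj : Function.Injective (fun y : Y => (y, (() : Unit))) :=
    fun a b hab => by simpa using congrArg Prod.fst hab
  have hinj2 : Function.Injective (fun x : X => (x, (() : Unit))) :=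
    fun a b hab => by simpa using congrArg Prod.fst hab
  have h1 : condH w f (fun ω => (g ω, (() : Unit))) ≤ condH w f (fun _ => ()) :=
    submodular hw f g (fun _ => ())
  have h2 : condH w f (fun ω => (g ω, (() : Unit))) = condH w f g :=
    condH_comp_inj f g _ hinj
  have h3 : condH w f (fun _ : Ω => ()) = H w f := by
    unfold condH
    rw [H_const hw (), sub_zero]
    exact H_comp_inj f _ hinj2
  linarith

end AuxLemmas3
section AuxIID

variable {𝒜 ℬ ℰ : Type*} [Fintype 𝒜] [Fintype ℬ] [Fintype ℰ]

lemma iidW_isPMF (p : 𝒜 × ℬ × ℰ → ℝ) (hp : IsPMF p) (n : ℕ) : IsPMF (iidW p n) := by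
  constructor
  · intro ω
    exact Finset.prod_nonneg fun i _ => hp.1 _
  · unfold iidW
    rw [← Fintype.prod_sum (fun _ (a : 𝒜 × ℬ × ℰ) => p a)]
    simp [hp.2]

lemma ite_mul_split (P Q : Prop) [Decidable P] [Decidable Q] (u v : ℝ) :
    (if P ∧ Q then u * v else 0) = (if P then u else 0) * (if Q then v else 0) := by
  by_cases hP : P <;> by_cases hQ : Q <;> simp [hP, hQ]

lemma iid_indep (p : 𝒜 × ℬ × ℰ → ℝ) (hp : IsPMF p) {n : ℕ} (i : Fin n)
    {S T : Type*} (X : 𝒜 × ℬ × ℰ → S) (Y : ({j : Fin n // j ≠ i} → 𝒜 × ℬ × ℰ) → T)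
    (s : S) (t : T) :
    pr (iidW p n) (fun ω => (X (ω i), Y (fun j => ω j.1))) (s, t)
      = pr (iidW p n) (fun ω => X (ω i)) s
        * pr (iidW p n) (fun ω => Y (fun j => ω j.1)) t := by
  classical
  set e := Equiv.funSplitAt i (𝒜 × ℬ × ℰ) with he
  have hω : ∀ F : (Fin n → 𝒜 × ℬ × ℰ) → ℝ,
      ∑ ω, F ω = ∑ q : (𝒜 × ℬ × ℰ) × ({j : Fin n // j ≠ i} → 𝒜 × ℬ × ℰ), F (e.symm q) :=
    fun F => (Equiv.sum_comp e.symm F).symm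
  have hi : ∀ (a : 𝒜 × ℬ × ℰ) (r : {j : Fin n // j ≠ i} → 𝒜 × ℬ × ℰ), e.symm (a, r) i = a := by
    intro a r; rw [he, Equiv.funSplitAt_symm_apply, dif_pos rfl]
  have hrest : ∀ (a : 𝒜 × ℬ × ℰ) (r : {j : Fin n // j ≠ i} → 𝒜 × ℬ × ℰ),
      (fun j : {j : Fin n // j ≠ i} => e.symm (a, r) j.1) = r := by
    intro a r; funext j
    rw [he, Equiv.funSplitAt_symm_apply, dif_neg j.2, Subtype.coe_eta]
  have hwfac : ∀ (a : 𝒜 × ℬ × ℰ) (r : {j : Fin n // j ≠ i} → 𝒜 × ℬ × ℰ),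
      iidW p n (e.symm (a, r)) = p a * ∏ j : {j : Fin n // j ≠ i}, p (r j) := by
    intro a r
    unfold iidW
    rw [Fintype.prod_eq_mul_prod_compl i]
    congr 1
    · rw [hi]
    · rw [Finset.prod_subtype (p := fun j => j ≠ i) ({i}ᶜ : Finset (Fin n))
        (by intro x; simp) (fun j => p (e.symm (a, r) j))]
      refine Finset.prod_congr rfl fun j _ => ?_
      rw [he, Equiv.funSplitAt_symm_apply, dif_neg j.2, Subtype.coe_eta]
  have hone : ∑ r : {j : Fin n // j ≠ i} → 𝒜 × ℬ × ℰ, ∏ j, p (r j) = 1 := by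
    rw [← Fintype.prod_sum (fun _ (a : 𝒜 × ℬ × ℰ) => p a)]
    simp [hp.2]
  set M := ∑ a : 𝒜 × ℬ × ℰ, if X a = s then p a else 0 with hM
  set N := ∑ r : {j : Fin n // j ≠ i} → 𝒜 × ℬ × ℰ, if Y r = t then ∏ j, p (r j) else 0 with hN
  have claim1 : pr (iidW p n) (fun ω => (X (ω i), Y (fun j => ω j.1))) (s, t) = M * N := by
    unfold pr
    refine Eq.trans (hω _) ?_
    rw [Fintype.sum_prod_type]
    rw [hM, hN, Finset.sum_mul_sum]
    refine Finset.sum_congr rfl fun a _ => Finset.sum_congr rfl fun r _ => ?_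
    simp only [hi, hrest, hwfac, Prod.mk.injEq]
    exact ite_mul_split _ _ _ _
  have claim2 : pr (iidW p n) (fun ω => X (ω i)) s = M := by
    unfold pr
    refine Eq.trans (hω _) ?_
    rw [Fintype.sum_prod_type]
    refine Finset.sum_congr rfl fun a _ => ?_
    simp only [hi, hwfac]
    split_ifs with hxa
    · rw [← Finset.mul_sum, hone, mul_one]
    · simp
  have claim3 : pr (iidW p n) (fun ω => Y (fun j => ω j.1)) t = N := by
    unfold pr
    refine Eq.trans (hω _) ?_
    rw [Fintype.sum_prod_type, Finset.sum_comm]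
    refine Finset.sum_congr rfl fun r _ => ?_
    simp only [hrest, hwfac]
    split_ifs with hyr
    · rw [← Finset.sum_mul, hp.2, one_mul]
    · simp
  rw [claim1, claim2, claim3]

end AuxIID
/-- The conditioning tuple `Cₖ = ((A_j, E_j)_{j<k}, Bⁿ)` used in the converse proof. -/
def Ck {𝒜 ℬ ℰ : Type*} (n k : ℕ) (ω : Fin n → 𝒜 × ℬ × ℰ) :
    ({j : Fin n // (j : ℕ) < k} → 𝒜 × ℰ) × (Fin n → ℬ) :=
  (fun j => ((ω j.1).1, (ω j.1).2.2), fun j => (ω j).2.1)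
section Sigmas

variable {𝒜 ℬ ℰ : Type*}

/-- Reassembles `(Vᵢ, Bᵢ)` from `(W, Cᵢ)`. -/
def sigmaB {𝒲 : Type*} (n : ℕ) (i : Fin n) :
    𝒲 × (({j : Fin n // (j : ℕ) < (i : ℕ)} → 𝒜 × ℰ) × (Fin n → ℬ)) →
      (𝒲 × ({j : Fin n // j < i} → 𝒜) × ({j : Fin n // j < i} → ℬ)
        × ({j : Fin n // i < j} → ℬ) × ({j : Fin n // j < i} → ℰ)) × ℬ :=
  fun q => ((q.1, fun j => (q.2.1 ⟨j.1, j.2⟩).1, fun j => q.2.2 j.1,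
    fun j => q.2.2 j.1, fun j => (q.2.1 ⟨j.1, j.2⟩).2), q.2.2 i)

lemma sigmaB_inj {𝒲 : Type*} (n : ℕ) (i : Fin n) :
    Function.Injective (sigmaB (𝒜 := 𝒜) (ℬ := ℬ) (ℰ := ℰ) (𝒲 := 𝒲) n i) := by
  rintro ⟨w, g, b⟩ ⟨w', g', b'⟩ h
  simp only [sigmaB, Prod.mk.injEq] at h
  obtain ⟨⟨hw, hA, hBlt, hBgt, hE⟩, hBi⟩ := h
  refine Prod.ext hw (Prod.ext ?_ ?_)
  · funext j
    obtain ⟨jv, hj⟩ := j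
    exact Prod.ext (congrFun hA ⟨jv, hj⟩) (congrFun hE ⟨jv, hj⟩)
  · funext j
    rcases lt_trichotomy j i with hj | hj | hj
    · exact congrFun hBlt ⟨j, hj⟩
    · subst hj; exact hBi
    · exact congrFun hBgt ⟨j, hj⟩

/-- The part of `Cᵢ` that only depends on coordinates `≠ i`. -/
def YYa (n : ℕ) (i : Fin n) :
    ({j : Fin n // j ≠ i} → 𝒜 × ℬ × ℰ) →
      ({j : Fin n // (j : ℕ) < (i : ℕ)} → 𝒜 × ℰ) × ({j : Fin n // j ≠ i} → ℬ) :=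
  fun r => (fun j => ((r ⟨j.1, Fin.ne_of_lt j.2⟩).1, (r ⟨j.1, Fin.ne_of_lt j.2⟩).2.2),
    fun j => (r j).2.1)

/-- Reassembles `Cᵢ` from `(Bᵢ, Yᵢ)`. -/
def sigmaA (n : ℕ) (i : Fin n) :
    ℬ × (({j : Fin n // (j : ℕ) < (i : ℕ)} → 𝒜 × ℰ) × ({j : Fin n // j ≠ i} → ℬ)) →
      ({j : Fin n // (j : ℕ) < (i : ℕ)} → 𝒜 × ℰ) × (Fin n → ℬ) :=
  fun q => (q.2.1, fun j => if h : j = i then q.1 else q.2.2 ⟨j, h⟩)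

lemma sigmaA_inj (n : ℕ) (i : Fin n) :
    Function.Injective (sigmaA (𝒜 := 𝒜) (ℬ := ℬ) (ℰ := ℰ) n i) := by
  rintro ⟨b, g, bb⟩ ⟨b', g', bb'⟩ h
  simp only [sigmaA, Prod.mk.injEq] at h
  obtain ⟨hg, hb⟩ := h
  refine Prod.ext ?_ (Prod.ext hg ?_)
  · have := congrFun hb i
    rwa [dif_pos rfl, dif_pos rfl] at this
  · funext j
    obtain ⟨jv, hj⟩ := j
    have := congrFun hb jv
    rwa [dif_neg hj, dif_neg hj] at this

lemma sigmaA_comp (n : ℕ) (i : Fin n) (ω : Fin n → 𝒜 × ℬ × ℰ) :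
    sigmaA n i ((ω i).2.1, YYa n i (fun j => ω j.1)) = Ck n (i : ℕ) ω := by
  unfold sigmaA YYa Ck
  refine Prod.ext rfl ?_
  funext j
  by_cases hj : j = i
  · subst hj; simp
  · simp [hj]

/-- Reassembles `C_{i+1}` from `((Aᵢ, Eᵢ), Cᵢ)`. -/
def sigmaD (n : ℕ) (i : Fin n) :
    (𝒜 × ℰ) × (({j : Fin n // (j : ℕ) < (i : ℕ)} → 𝒜 × ℰ) × (Fin n → ℬ)) →
      ({j : Fin n // (j : ℕ) < (i : ℕ) + 1} → 𝒜 × ℰ) × (Fin n → ℬ) :=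
  fun q => (fun j => if h : (j.1 : ℕ) < (i : ℕ) then q.2.1 ⟨j.1, h⟩ else q.1, q.2.2)

lemma sigmaD_inj (n : ℕ) (i : Fin n) :
    Function.Injective (sigmaD (𝒜 := 𝒜) (ℬ := ℬ) (ℰ := ℰ) n i) := by
  rintro ⟨ae, g, b⟩ ⟨ae', g', b'⟩ h
  simp only [sigmaD, Prod.mk.injEq] at h
  obtain ⟨hfun, hb⟩ := h
  refine Prod.ext ?_ (Prod.ext ?_ hb)
  · have := congrFun hfun ⟨i, Nat.lt_succ_self _⟩
    rwa [dif_neg (lt_irrefl _), dif_neg (lt_irrefl _)] at this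
  · funext j
    obtain ⟨jv, hj⟩ := j
    have := congrFun hfun ⟨jv, Nat.lt_succ_of_lt hj⟩
    rwa [dif_pos hj, dif_pos hj] at this

lemma sigmaD_comp (n : ℕ) (i : Fin n) (ω : Fin n → 𝒜 × ℬ × ℰ) :
    sigmaD n i (((ω i).1, (ω i).2.2), Ck n (i : ℕ) ω) = Ck n ((i : ℕ) + 1) ω := by
  unfold sigmaD Ck
  refine Prod.ext ?_ rfl
  funext j
  by_cases hj : (j.1 : ℕ) < (i : ℕ)
  · simp [hj]
  · have hji : j.1 = i := Fin.ext (Nat.le_antisymm (Nat.lt_succ_iff.mp j.2) (Nat.not_lt.mp hj))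
    simp [hj, hji]

/-- Reassembles `C₀` from `Bⁿ`. -/
def sigma0 (n : ℕ) : (Fin n → ℬ) →
    ({j : Fin n // (j : ℕ) < 0} → 𝒜 × ℰ) × (Fin n → ℬ) :=
  fun b => (fun j => (Nat.not_lt_zero _ j.2).elim, b)

lemma sigma0_inj (n : ℕ) :
    Function.Injective (sigma0 (𝒜 := 𝒜) (ℬ := ℬ) (ℰ := ℰ) n) :=
  fun _ _ h => congrArg Prod.snd h

lemma sigma0_comp (n : ℕ) (ω : Fin n → 𝒜 × ℬ × ℰ) :
    sigma0 n (Bn n ω) = Ck n 0 ω := by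
  unfold sigma0 Ck Bn
  refine Prod.ext ?_ rfl
  funext j
  exact absurd j.2 (Nat.not_lt_zero _)

lemma prod_swap_inj {X Y Z : Type*} :
    Function.Injective (fun q : Y × (X × Z) => (q.2.1, (q.1, q.2.2))) := by
  intro q q' h
  simp only [Prod.mk.injEq] at h
  exact Prod.ext h.2.1 (Prod.ext h.1 h.2.2)

lemma prod_swap_inj2 {X Y Z : Type*} :
    Function.Injective (fun q : Y × (X × Z) => ((q.2.1, q.1), q.2.2)) := by
  intro q q' h
  simp only [Prod.mk.injEq] at h
  exact Prod.ext h.1.2 (Prod.ext h.1.1 h.2)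

lemma H_swap {Ω : Type*} [Fintype Ω] {X Y Z : Type*} [Fintype X] [Fintype Y] [Fintype Z]
    (w : Ω → ℝ) (u : Ω → X) (v : Ω → Y) (k : Ω → Z) :
    H w (fun ω => (u ω, (v ω, k ω))) = H w (fun ω => (v ω, (u ω, k ω))) :=
  H_comp_inj (fun ω => (v ω, (u ω, k ω))) (fun q => (q.2.1, (q.1, q.2.2))) prod_swap_inj

end Sigmas
section MainProof

lemma step_bound {𝒜 ℬ ℰ 𝒲 : Type*} [Fintype 𝒜] [Fintype ℬ] [Fintype ℰ] [Fintype 𝒲]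
    (p : 𝒜 × ℬ × ℰ → ℝ) (hp : IsPMF p) {n : ℕ} (f : (Fin n → 𝒜) → 𝒲) (i : Fin n) :
    condMI (iidW p n) (auxV n f i) (fun ω => (ω i).1) (fun ω => (ω i).2.1)
      ≤ condH (iidW p n) (fun ω => f (An n ω)) (Ck n (i : ℕ))
        - condH (iidW p n) (fun ω => f (An n ω)) (Ck n ((i : ℕ) + 1)) := by
  classical
  have hw : IsPMF (iidW p n) := iidW_isPMF p hp n
  set w := iidW p n with hwdef
  set A : (Fin n → 𝒜 × ℬ × ℰ) → 𝒜 := fun ω => (ω i).1 with hAdef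
  set B : (Fin n → 𝒜 × ℬ × ℰ) → ℬ := fun ω => (ω i).2.1 with hBdef
  set E : (Fin n → 𝒜 × ℬ × ℰ) → ℰ := fun ω => (ω i).2.2 with hEdef
  set W : (Fin n → 𝒜 × ℬ × ℰ) → 𝒲 := fun ω => f (An n ω) with hWdef
  -- Step 1: symmetry of conditional mutual information
  have step1 : condMI w (auxV n f i) A B
      = condH w A B - condH w A (fun ω => (auxV n f i ω, B ω)) := by
    have h1 := H_swap w A (auxV n f i) B
    show (H w (fun ω => (auxV n f i ω, B ω)) - H w B)
        - (H w (fun ω => (auxV n f i ω, (A ω, B ω))) - H w (fun ω => (A ω, B ω)))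
      = (H w (fun ω => (A ω, B ω)) - H w B)
        - (H w (fun ω => (A ω, (auxV n f i ω, B ω))) - H w (fun ω => (auxV n f i ω, B ω)))
    linarith
  -- Step 2: relabelling the conditioning variable
  have step2 : condH w A (fun ω => (auxV n f i ω, B ω))
      = condH w A (fun ω => (W ω, Ck n (i : ℕ) ω)) := by
    have hcomp : (fun ω => (auxV n f i ω, B ω))
        = fun ω => sigmaB n i (W ω, Ck n (i : ℕ) ω) := rfl
    rw [hcomp, condH_comp_inj A (fun ω => (W ω, Ck n (i : ℕ) ω)) (sigmaB n i) (sigmaB_inj n i)]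
  -- Step 3: independence across coordinates
  have step3 : condH w A (Ck n (i : ℕ)) = condH w A B := by
    have hcomp : Ck n (i : ℕ) = fun ω => sigmaA n i (B ω, YYa n i (fun j => ω j.1)) := by
      funext ω
      exact (sigmaA_comp n i ω).symm
    rw [hcomp, condH_comp_inj A (fun ω => (B ω, YYa n i (fun j => ω j.1)))
      (sigmaA n i) (sigmaA_inj n i)]
    exact condH_of_indep hw A B (fun ω => YYa n i (fun j => ω j.1))
      (fun x y z => iid_indep p hp i (fun a => (a.1, a.2.1)) (YYa n i) (x, y) z)
  -- Step 4: symmetry of mutual information given C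
  have step4 : condH w A (Ck n (i : ℕ)) - condH w A (fun ω => (W ω, Ck n (i : ℕ) ω))
      = condH w W (Ck n (i : ℕ)) - condH w W (fun ω => (A ω, Ck n (i : ℕ) ω)) := by
    have h1 := H_swap w A W (Ck n (i : ℕ))
    show (H w (fun ω => (A ω, Ck n (i : ℕ) ω)) - H w (Ck n (i : ℕ)))
        - (H w (fun ω => (A ω, (W ω, Ck n (i : ℕ) ω))) - H w (fun ω => (W ω, Ck n (i : ℕ) ω)))
      = (H w (fun ω => (W ω, Ck n (i : ℕ) ω)) - H w (Ck n (i : ℕ)))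
        - (H w (fun ω => (W ω, (A ω, Ck n (i : ℕ) ω))) - H w (fun ω => (A ω, Ck n (i : ℕ) ω)))
    linarith
  -- Step 5: conditioning on more reduces entropy
  have step5 : condH w W (fun ω => ((A ω, E ω), Ck n (i : ℕ) ω))
      ≤ condH w W (fun ω => (A ω, Ck n (i : ℕ) ω)) := by
    have hcomp : (fun ω => ((A ω, E ω), Ck n (i : ℕ) ω))
        = fun ω => ((fun q : ℰ × (𝒜 × (({j : Fin n // (j : ℕ) < (i : ℕ)} → 𝒜 × ℰ)
            × (Fin n → ℬ))) => ((q.2.1, q.1), q.2.2)) (E ω, (A ω, Ck n (i : ℕ) ω))) := rfl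
    rw [hcomp, condH_comp_inj W (fun ω => (E ω, (A ω, Ck n (i : ℕ) ω))) _ prod_swap_inj2]
    exact submodular hw W E (fun ω => (A ω, Ck n (i : ℕ) ω))
  -- Step 6: relabelling C_{i+1}
  have step6 : condH w W (Ck n ((i : ℕ) + 1))
      = condH w W (fun ω => ((A ω, E ω), Ck n (i : ℕ) ω)) := by
    have hcomp : Ck n ((i : ℕ) + 1) = fun ω => sigmaD n i ((A ω, E ω), Ck n (i : ℕ) ω) := by
      funext ω
      exact (sigmaD_comp n i ω).symm
    rw [hcomp, condH_comp_inj W (fun ω => ((A ω, E ω), Ck n (i : ℕ) ω))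
      (sigmaD n i) (sigmaD_inj n i)]
  calc condMI w (auxV n f i) A B
      = condH w A B - condH w A (fun ω => (auxV n f i ω, B ω)) := step1
    _ = condH w A (Ck n (i : ℕ)) - condH w A (fun ω => (W ω, Ck n (i : ℕ) ω)) := by
        rw [step2, step3]
    _ = condH w W (Ck n (i : ℕ)) - condH w W (fun ω => (A ω, Ck n (i : ℕ) ω)) := step4
    _ ≤ condH w W (Ck n (i : ℕ)) - condH w W (fun ω => ((A ω, E ω), Ck n (i : ℕ) ω)) := by
        linarith
    _ = condH w W (Ck n (i : ℕ)) - condH w W (Ck n ((i : ℕ) + 1)) := by rw [step6]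

end MainProof

/-- For an i.i.d. source `(Aᵢ,Bᵢ,Eᵢ)`, `W = f(Aⁿ)` and
`Vᵢ = (W, A^{i-1}, B^{i-1}, B_{i+1}ⁿ, E^{i-1})`, one has
`H(W) ≥ Σᵢ I(Vᵢ ; Aᵢ | Bᵢ)`. -/
theorem rate_converse_bound
    {𝒜 ℬ ℰ 𝒲 : Type*} [Fintype 𝒜] [Fintype ℬ] [Fintype ℰ] [Fintype 𝒲]
    (p : 𝒜 × ℬ × ℰ → ℝ) (hp : IsPMF p) (n : ℕ)
    (f : (Fin n → 𝒜) → 𝒲) :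
    ∑ i : Fin n, condMI (iidW p n) (auxV n f i)
        (fun ω => (ω i).1) (fun ω => (ω i).2.1)
      ≤ H (iidW p n) (fun ω => f (An n ω)) := by
  classical
  have hw : IsPMF (iidW p n) := iidW_isPMF p hp n
  have key : ∀ i : Fin n, condMI (iidW p n) (auxV n f i)
      (fun ω => (ω i).1) (fun ω => (ω i).2.1)
      ≤ condH (iidW p n) (fun ω => f (An n ω)) (Ck n (i : ℕ))
        - condH (iidW p n) (fun ω => f (An n ω)) (Ck n ((i : ℕ) + 1)) :=
    fun i => step_bound p hp f i
  have tele : ∑ i : Fin n, (condH (iidW p n) (fun ω => f (An n ω)) (Ck n (i : ℕ))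
        - condH (iidW p n) (fun ω => f (An n ω)) (Ck n ((i : ℕ) + 1)))
      = condH (iidW p n) (fun ω => f (An n ω)) (Ck n 0)
        - condH (iidW p n) (fun ω => f (An n ω)) (Ck n n) := by
    rw [Fin.sum_univ_eq_sum_range (fun k => condH (iidW p n) (fun ω => f (An n ω)) (Ck n k)
      - condH (iidW p n) (fun ω => f (An n ω)) (Ck n (k + 1))) n]
    exact Finset.sum_range_sub' (fun k => condH (iidW p n) (fun ω => f (An n ω)) (Ck n k)) n
  have h0 : condH (iidW p n) (fun ω => f (An n ω)) (Ck n 0)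
      ≤ H (iidW p n) (fun ω => f (An n ω)) := by
    have hcomp : Ck n 0 = fun ω : Fin n → 𝒜 × ℬ × ℰ => sigma0 (𝒜 := 𝒜) (ℰ := ℰ) n (Bn n ω) := by
      funext ω
      exact (sigma0_comp n ω).symm
    calc condH (iidW p n) (fun ω => f (An n ω)) (Ck n 0)
        = condH (iidW p n) (fun ω => f (An n ω)) (Bn n) := by
          rw [hcomp, condH_comp_inj (fun ω => f (An n ω)) (Bn n) (sigma0 n) (sigma0_inj n)]
      _ ≤ H (iidW p n) (fun ω => f (An n ω)) := condH_le_H hw _ _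
  have hn : 0 ≤ condH (iidW p n) (fun ω => f (An n ω)) (Ck n n) :=
    condH_nonneg hw.1 _ _
  calc ∑ i : Fin n, condMI (iidW p n) (auxV n f i) (fun ω => (ω i).1) (fun ω => (ω i).2.1)
      ≤ ∑ i : Fin n, (condH (iidW p n) (fun ω => f (An n ω)) (Ck n (i : ℕ))
          - condH (iidW p n) (fun ω => f (An n ω)) (Ck n ((i : ℕ) + 1))) :=
        Finset.sum_le_sum fun i _ => key i
    _ = condH (iidW p n) (fun ω => f (An n ω)) (Ck n 0)
        - condH (iidW p n) (fun ω => f (An n ω)) (Ck n n) := tele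
    _ ≤ H (iidW p n) (fun ω => f (An n ω)) := by linarith

end SLSC

end
end

section
/- Csiszár–Körner sum identity: for any jointly distributed random variables W, B₁,…,B_n, E₁,…,E_n with values in finite sets, Σ_{i=1}^n I(E_i ; B_{i+1}ⁿ | W, E^{i−1}) = Σ_{i=1}^n I(B_i ; E^{i−1} | W, B_{i+1}ⁿ). -/
noncomputable section

namespace SLSC

open scoped BigOperators

variable {Ω : Type*} [Fintype Ω]

variable {𝒜 ℬ ℰ : Type*} [Fintype 𝒜] [Fintype ℬ] [Fintype ℰ]

/-! ### Auxiliary machinery for the Csiszár–Körner sum identity -/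

/-- Entropy is invariant under mutually-determining recodings. -/
lemma H_congr {Ω' X Y : Type*} [Fintype Ω'] [Fintype X] [Fintype Y]
    (w : Ω' → ℝ) (f : Ω' → X) (g : Ω' → Y) (φ : X → Y) (ψ : Y → X)
    (hφ : ∀ ω, φ (f ω) = g ω) (hψ : ∀ ω, ψ (g ω) = f ω) :
    H w f = H w g := by
  classical
  have hpr : ∀ ω0, pr w f (f ω0) = pr w g (g ω0) := by
    intro ω0
    unfold pr
    refine Finset.sum_congr rfl fun ω _ => ?_
    have hiff : f ω = f ω0 ↔ g ω = g ω0 :=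
      ⟨fun h => by rw [← hφ ω, ← hφ ω0, h], fun h => by rw [← hψ ω, ← hψ ω0, h]⟩
    by_cases h : f ω = f ω0
    · rw [if_pos h, if_pos (hiff.mp h)]
    · rw [if_neg h, if_neg fun hc => h (hiff.mpr hc)]
  unfold H
  congr 1
  rw [← Finset.sum_subset (Finset.subset_univ (Finset.univ.image f)) (fun x _ hx => by
        have h0 : pr w f x = 0 := by
          unfold pr
          exact Finset.sum_eq_zero fun ω _ =>
            if_neg fun hc => hx (Finset.mem_image.mpr ⟨ω, Finset.mem_univ ω, hc⟩)
        rw [h0, zero_mul]),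
      ← Finset.sum_subset (Finset.subset_univ (Finset.univ.image g)) (fun y _ hy => by
        have h0 : pr w g y = 0 := by
          unfold pr
          exact Finset.sum_eq_zero fun ω _ =>
            if_neg fun hc => hy (Finset.mem_image.mpr ⟨ω, Finset.mem_univ ω, hc⟩)
        rw [h0, zero_mul])]
  refine Finset.sum_bij' (fun x _ => φ x) (fun y _ => ψ y) ?_ ?_ ?_ ?_ ?_
  · intro x hx
    obtain ⟨ω, -, rfl⟩ := Finset.mem_image.mp hx
    rw [hφ ω]
    exact Finset.mem_image.mpr ⟨ω, Finset.mem_univ ω, rfl⟩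
  · intro y hy
    obtain ⟨ω, -, rfl⟩ := Finset.mem_image.mp hy
    rw [hψ ω]
    exact Finset.mem_image.mpr ⟨ω, Finset.mem_univ ω, rfl⟩
  · intro x hx
    obtain ⟨ω, -, rfl⟩ := Finset.mem_image.mp hx
    rw [hφ ω, hψ ω]
  · intro y hy
    obtain ⟨ω, -, rfl⟩ := Finset.mem_image.mp hy
    rw [hψ ω, hφ ω]
  · intro x hx
    obtain ⟨ω, -, rfl⟩ := Finset.mem_image.mp hx
    rw [hφ ω, hpr ω]

lemma condMI_eq {Ω' X Y Z : Type*} [Fintype Ω'] [Fintype X] [Fintype Y] [Fintype Z]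
    (w : Ω' → ℝ) (f : Ω' → X) (g : Ω' → Y) (h : Ω' → Z) :
    condMI w f g h
      = H w (fun ω => (f ω, h ω)) - H w h
        - (H w (fun ω => (f ω, (g ω, h ω))) - H w (fun ω => (g ω, h ω))) := by
  simp only [condMI, condH]

section CKaux

variable {𝒲 : Type*} [Fintype 𝒲]

/-- `H(W, E^{<m})`. -/
def ckHE (w : Ω → ℝ) (n : ℕ) (W : Ω → 𝒲) (E : Ω → Fin n → ℰ) (m : ℕ) : ℝ :=
  H w (fun ω => (W ω, fun j : {j : Fin n // j.1 < m} => E ω j.1))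

/-- `H(W, B^{≥m})`. -/
def ckHB (w : Ω → ℝ) (n : ℕ) (W : Ω → 𝒲) (B : Ω → Fin n → ℬ) (m : ℕ) : ℝ :=
  H w (fun ω => (W ω, fun j : {j : Fin n // m ≤ j.1} => B ω j.1))

/-- `H(W, E^{<m}, B^{≥m})`. -/
def ckG (w : Ω → ℝ) (n : ℕ) (W : Ω → 𝒲) (B : Ω → Fin n → ℬ) (E : Ω → Fin n → ℰ)
    (m : ℕ) : ℝ :=
  H w (fun ω => (W ω, ((fun j : {j : Fin n // j.1 < m} => E ω j.1),
    (fun j : {j : Fin n // m ≤ j.1} => B ω j.1))))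

/-- `H(W, E^{<m}, B^{>m})`. -/
def ckM (w : Ω → ℝ) (n : ℕ) (W : Ω → 𝒲) (B : Ω → Fin n → ℬ) (E : Ω → Fin n → ℰ)
    (m : ℕ) : ℝ :=
  H w (fun ω => (W ω, ((fun j : {j : Fin n // j.1 < m} => E ω j.1),
    (fun j : {j : Fin n // m + 1 ≤ j.1} => B ω j.1))))

variable (w : Ω → ℝ) {n : ℕ} (W : Ω → 𝒲) (B : Ω → Fin n → ℬ) (E : Ω → Fin n → ℰ)

lemma ckL1 (i : Fin n) :
    H w (fun ω => (E ω i, (W ω, fun j : {j : Fin n // j < i} => E ω j.1)))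
      = ckHE w n W E (i.1 + 1) :=
  H_congr w _ _
    (fun p => (p.2.1, fun j => if h : j.1 < i then p.2.2 ⟨j.1, h⟩ else p.1))
    (fun q => (q.2 ⟨i, Nat.lt_succ_self _⟩,
      (q.1, fun j => q.2 ⟨j.1, Nat.lt_succ_of_lt j.2⟩)))
    (fun ω => by
      dsimp only
      refine congrArg (Prod.mk (W ω)) ?_
      funext j
      by_cases h : (j.1 : Fin n) < i
      · exact dif_pos h
      · have hji : j.1 = i := by
          have h1 := j.2
          have h2 : ¬ j.1.1 < i.1 := h
          exact Fin.ext (by omega)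
        exact (dif_neg h).trans (congrArg (E ω) hji.symm))
    (fun ω => rfl)

lemma ckL2 (i : Fin n) :
    H w (fun ω => (W ω, fun j : {j : Fin n // j < i} => E ω j.1))
      = ckHE w n W E i.1 :=
  H_congr w _ _
    (fun q => (q.1, fun j => q.2 ⟨j.1, j.2⟩))
    (fun q => (q.1, fun j => q.2 ⟨j.1, j.2⟩))
    (fun ω => rfl) (fun ω => rfl)

lemma ckL3 (i : Fin n) :
    H w (fun ω => (E ω i, ((fun j : {j : Fin n // i < j} => B ω j.1),
        (W ω, fun j : {j : Fin n // j < i} => E ω j.1))))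
      = ckG w n W B E (i.1 + 1) :=
  H_congr w _ _
    (fun p => (p.2.2.1, ((fun j => if h : j.1 < i then p.2.2.2 ⟨j.1, h⟩ else p.1),
      (fun j => p.2.1 ⟨j.1, j.2⟩))))
    (fun q => (q.2.1 ⟨i, Nat.lt_succ_self _⟩,
      ((fun j => q.2.2 ⟨j.1, j.2⟩),
        (q.1, fun j => q.2.1 ⟨j.1, Nat.lt_succ_of_lt j.2⟩))))
    (fun ω => by
      dsimp only
      refine congrArg (Prod.mk (W ω)) (congr_arg₂ Prod.mk ?_ rfl)
      funext j
      by_cases h : (j.1 : Fin n) < i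
      · exact dif_pos h
      · have hji : j.1 = i := by
          have h1 := j.2
          have h2 : ¬ j.1.1 < i.1 := h
          exact Fin.ext (by omega)
        exact (dif_neg h).trans (congrArg (E ω) hji.symm))
    (fun ω => rfl)

lemma ckL4 (i : Fin n) :
    H w (fun ω => ((fun j : {j : Fin n // i < j} => B ω j.1),
        (W ω, fun j : {j : Fin n // j < i} => E ω j.1)))
      = ckM w n W B E i.1 :=
  H_congr w _ _
    (fun p => (p.2.1, ((fun j => p.2.2 ⟨j.1, j.2⟩), (fun j => p.1 ⟨j.1, j.2⟩))))
    (fun q => ((fun j => q.2.2 ⟨j.1, j.2⟩), (q.1, fun j => q.2.1 ⟨j.1, j.2⟩)))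
    (fun ω => rfl) (fun ω => rfl)

lemma ckR1 (i : Fin n) :
    H w (fun ω => (B ω i, (W ω, fun j : {j : Fin n // i < j} => B ω j.1)))
      = ckHB w n W B i.1 :=
  H_congr w _ _
    (fun p => (p.2.1, fun j => if h : i < j.1 then p.2.2 ⟨j.1, h⟩ else p.1))
    (fun q => (q.2 ⟨i, Nat.le_refl _⟩,
      (q.1, fun j => q.2 ⟨j.1, Nat.le_of_lt j.2⟩)))
    (fun ω => by
      dsimp only
      refine congrArg (Prod.mk (W ω)) ?_
      funext j
      by_cases h : i < (j.1 : Fin n)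
      · exact dif_pos h
      · have hji : j.1 = i := by
          have h1 := j.2
          have h2 : ¬ i.1 < j.1.1 := h
          exact Fin.ext (by omega)
        exact (dif_neg h).trans (congrArg (B ω) hji.symm))
    (fun ω => rfl)

lemma ckR2 (i : Fin n) :
    H w (fun ω => (W ω, fun j : {j : Fin n // i < j} => B ω j.1))
      = ckHB w n W B (i.1 + 1) :=
  H_congr w _ _
    (fun q => (q.1, fun j => q.2 ⟨j.1, j.2⟩))
    (fun q => (q.1, fun j => q.2 ⟨j.1, j.2⟩))
    (fun ω => rfl) (fun ω => rfl)

lemma ckR3 (i : Fin n) :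
    H w (fun ω => (B ω i, ((fun j : {j : Fin n // j < i} => E ω j.1),
        (W ω, fun j : {j : Fin n // i < j} => B ω j.1))))
      = ckG w n W B E i.1 :=
  H_congr w _ _
    (fun p => (p.2.2.1, ((fun j => p.2.1 ⟨j.1, j.2⟩),
      (fun j => if h : i < j.1 then p.2.2.2 ⟨j.1, h⟩ else p.1))))
    (fun q => (q.2.2 ⟨i, Nat.le_refl _⟩,
      ((fun j => q.2.1 ⟨j.1, j.2⟩),
        (q.1, fun j => q.2.2 ⟨j.1, Nat.le_of_lt j.2⟩))))
    (fun ω => by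
      dsimp only
      refine congrArg (Prod.mk (W ω)) (congr_arg₂ Prod.mk rfl ?_)
      funext j
      by_cases h : i < (j.1 : Fin n)
      · exact dif_pos h
      · have hji : j.1 = i := by
          have h1 := j.2
          have h2 : ¬ i.1 < j.1.1 := h
          exact Fin.ext (by omega)
        exact (dif_neg h).trans (congrArg (B ω) hji.symm))
    (fun ω => rfl)

lemma ckR4 (i : Fin n) :
    H w (fun ω => ((fun j : {j : Fin n // j < i} => E ω j.1),
        (W ω, fun j : {j : Fin n // i < j} => B ω j.1)))
      = ckM w n W B E i.1 :=
  H_congr w _ _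
    (fun p => (p.2.1, ((fun j => p.1 ⟨j.1, j.2⟩), (fun j => p.2.2 ⟨j.1, j.2⟩))))
    (fun q => ((fun j => q.2.1 ⟨j.1, j.2⟩), (q.1, fun j => q.2.2 ⟨j.1, j.2⟩)))
    (fun ω => rfl) (fun ω => rfl)

lemma ckHE_zero : ckHE w n W E 0 = H w W :=
  H_congr w _ _ (fun q => q.1)
    (fun x => (x, fun j => absurd j.2 (Nat.not_lt_zero _)))
    (fun ω => rfl)
    (fun ω => by
      refine congrArg (Prod.mk (W ω)) ?_
      funext j
      exact absurd j.2 (Nat.not_lt_zero _))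

lemma ckHB_top : ckHB w n W B n = H w W :=
  H_congr w _ _ (fun q => q.1)
    (fun x => (x, fun j => absurd j.1.2 (Nat.not_lt.mpr j.2)))
    (fun ω => rfl)
    (fun ω => by
      refine congrArg (Prod.mk (W ω)) ?_
      funext j
      exact absurd j.1.2 (Nat.not_lt.mpr j.2))

lemma ckG_zero : ckG w n W B E 0 = ckHB w n W B 0 :=
  H_congr w _ _ (fun q => (q.1, q.2.2))
    (fun r => (r.1, ((fun j => absurd j.2 (Nat.not_lt_zero _)), r.2)))
    (fun ω => rfl)
    (fun ω => by
      refine congrArg (Prod.mk (W ω)) (congr_arg₂ Prod.mk ?_ rfl)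
      funext j
      exact absurd j.2 (Nat.not_lt_zero _))

lemma ckG_top : ckG w n W B E n = ckHE w n W E n :=
  H_congr w _ _ (fun q => (q.1, q.2.1))
    (fun r => (r.1, (r.2, fun j => absurd j.1.2 (Nat.not_lt.mpr j.2))))
    (fun ω => rfl)
    (fun ω => by
      refine congrArg (Prod.mk (W ω)) (congr_arg₂ Prod.mk rfl ?_)
      funext j
      exact absurd j.1.2 (Nat.not_lt.mpr j.2))

end CKaux

/-- **Csiszár–Körner sum identity**: for arbitrary jointly distributed `W`, `B₁,…,Bₙ`,
`E₁,…,Eₙ`, `Σᵢ I(Eᵢ ; B_{i+1}ⁿ | W, E^{i-1}) = Σᵢ I(Bᵢ ; E^{i-1} | W, B_{i+1}ⁿ)`. -/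
theorem csiszar_korner_sum_identity
    {Ω 𝒲 ℬ ℰ : Type*} [Fintype Ω] [Fintype 𝒲] [Fintype ℬ] [Fintype ℰ]
    (w : Ω → ℝ) (hw : IsPMF w) (n : ℕ)
    (W : Ω → 𝒲) (B : Ω → Fin n → ℬ) (E : Ω → Fin n → ℰ) :
    ∑ i : Fin n, condMI w (fun ω => E ω i)
        (fun ω => fun j : {j : Fin n // i < j} => B ω j.1)
        (fun ω => (W ω, fun j : {j : Fin n // j < i} => E ω j.1))
      = ∑ i : Fin n, condMI w (fun ω => B ω i)
          (fun ω => fun j : {j : Fin n // j < i} => E ω j.1)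
          (fun ω => (W ω, fun j : {j : Fin n // i < j} => B ω j.1)) := by
  classical
  have key : ∀ i : Fin n,
      condMI w (fun ω => E ω i)
        (fun ω => fun j : {j : Fin n // i < j} => B ω j.1)
        (fun ω => (W ω, fun j : {j : Fin n // j < i} => E ω j.1))
      - condMI w (fun ω => B ω i)
          (fun ω => fun j : {j : Fin n // j < i} => E ω j.1)
          (fun ω => (W ω, fun j : {j : Fin n // i < j} => B ω j.1))
      = (fun m : ℕ => (ckHE w n W E (m + 1) - ckHE w n W E m)
          + ((ckHB w n W B (m + 1) - ckHB w n W B m)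
            + (ckG w n W B E m - ckG w n W B E (m + 1)))) i.1 := by
    intro i
    show _ = (ckHE w n W E (i.1 + 1) - ckHE w n W E i.1)
        + ((ckHB w n W B (i.1 + 1) - ckHB w n W B i.1)
          + (ckG w n W B E i.1 - ckG w n W B E (i.1 + 1)))
    rw [condMI_eq, condMI_eq, ckL1 w W E i, ckL2 w W E i, ckL3 w W B E i, ckL4 w W B E i,
        ckR1 w W B i, ckR2 w W B i, ckR3 w W B E i, ckR4 w W B E i]
    ring
  rw [← sub_eq_zero, ← Finset.sum_sub_distrib, Finset.sum_congr rfl fun i _ => key i,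
      Fin.sum_univ_eq_sum_range (fun m : ℕ => (ckHE w n W E (m + 1) - ckHE w n W E m)
          + ((ckHB w n W B (m + 1) - ckHB w n W B m)
            + (ckG w n W B E m - ckG w n W B E (m + 1)))) n]
  have hs : ∑ m ∈ Finset.range n,
        ((ckHE w n W E (m + 1) - ckHE w n W E m)
          + ((ckHB w n W B (m + 1) - ckHB w n W B m)
            + (ckG w n W B E m - ckG w n W B E (m + 1))))
      = (∑ m ∈ Finset.range n, (ckHE w n W E (m + 1) - ckHE w n W E m))
        + ((∑ m ∈ Finset.range n, (ckHB w n W B (m + 1) - ckHB w n W B m))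
          + (∑ m ∈ Finset.range n, (ckG w n W B E m - ckG w n W B E (m + 1)))) := by
    rw [← Finset.sum_add_distrib, ← Finset.sum_add_distrib]
  have t1 : ∑ m ∈ Finset.range n, (ckHE w n W E (m + 1) - ckHE w n W E m)
      = ckHE w n W E n - ckHE w n W E 0 :=
    Finset.sum_range_sub (fun m => ckHE w n W E m) n
  have t2 : ∑ m ∈ Finset.range n, (ckHB w n W B (m + 1) - ckHB w n W B m)
      = ckHB w n W B n - ckHB w n W B 0 :=
    Finset.sum_range_sub (fun m => ckHB w n W B m) n
  have t3 : ∑ m ∈ Finset.range n, (ckG w n W B E m - ckG w n W B E (m + 1))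
      = ckG w n W B E 0 - ckG w n W B E n :=
    Finset.sum_range_sub' (fun m => ckG w n W B E m) n
  have e1 := ckHE_zero w W E (n := n)
  have e2 := ckHB_top w W B (n := n)
  have e3 := ckG_zero w W B E (n := n)
  have e4 := ckG_top w W B E (n := n)
  rw [hs, t1, t2, t3]
  linarith [e1, e2, e3, e4]


end SLSC

end
end
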